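/- arXiv:1305.4557 — 2 statements merged into one kernel-verified Lean document; each statement's English description precedes it below -/
import Mathlib

section
/- Let G be a k-connected, triangle-free graph with δ(G) ≥ k + 1. Then either V(G) is a (k+1)-block, or G has at least two distinct (k+1)-blocks, each of size at least 2δ(G). -/
variable {V : Type*}

/-- `S` separates `u` from `v` in `G`: neither lies in `S` and every walk meets `S`. -/
def SepBy (G : SimpleGraph V) (S : Set V) (u v : V) : Prop :=
  u ∉ S ∧ v ∉ S ∧ ∀ p : G.Walk u v, ∃ w ∈ p.support, w ∈ S

/-- `X` is (≤k)-inseparable: no set of at most `k` vertices separates two of its vertices. -/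
def Insep (G : SimpleGraph V) (k : ℕ) (X : Set V) : Prop :=
  ∀ S : Finset V, S.card ≤ k → ∀ u ∈ X, ∀ v ∈ X, ¬ SepBy G (S : Set V) u v

/-- A `k`-block: a maximal (≤(k-1))-inseparable set of at least `k` vertices. -/
def IsBlockN (G : SimpleGraph V) (k : ℕ) (B : Set V) : Prop :=
  k ≤ B.ncard ∧ Insep G (k - 1) B ∧
    ∀ B' : Set V, B ⊆ B' → Insep G (k - 1) B' → B' = B

/-- `(A,B)` is a separation of `G`. -/
def IsSepn (G : SimpleGraph V) (A B : Set V) : Prop :=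
  A ∪ B = Set.univ ∧ ∀ a ∈ A \ B, ∀ b ∈ B \ A, ¬ G.Adj a b

/-- A separation is proper if neither side contains the other. -/
def ProperSep (A B : Set V) : Prop := ¬ A ⊆ B ∧ ¬ B ⊆ A

/-- `G` is `k`-connected. -/
def KConn (G : SimpleGraph V) [Fintype V] (k : ℕ) : Prop :=
  k < Fintype.card V ∧ ∀ S : Finset V, S.card < k → ∀ u v : V, ¬ SepBy G (S : Set V) u v

section Aux
open Set SimpleGraph

variable {G : SimpleGraph V} {k : ℕ}

lemma isSepn_symm {A B : Set V} (h : IsSepn G A B) : IsSepn G B A :=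
  ⟨by rw [Set.union_comm]; exact h.1, fun b hb a ha hadj => h.2 a ha b hb hadj.symm⟩

lemma mem_of_not_left {A B : Set V} (h : A ∪ B = Set.univ) {x : V} (hx : x ∉ A) : x ∈ B := by
  have hx2 := Set.mem_univ x
  rw [← h] at hx2
  exact hx2.resolve_left hx

lemma walk_meets {A B : Set V} (hsep : IsSepn G A B) {b : V} (hb : b ∈ B \ A) :
    ∀ {a : V} (p : G.Walk a b), a ∈ A \ B → ∃ w ∈ p.support, w ∈ A ∩ B
  | _, SimpleGraph.Walk.nil, ha => absurd ha.1 hb.2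
  | a, SimpleGraph.Walk.cons (v := c) h q, ha => by
      by_cases hcA : c ∈ A
      · by_cases hcB : c ∈ B
        · exact ⟨c, by simp, hcA, hcB⟩
        · obtain ⟨w, hw, hw2⟩ := walk_meets hsep hb q ⟨hcA, hcB⟩
          exact ⟨w, by simp [hw], hw2⟩
      · exact absurd h (hsep.2 a ha c ⟨mem_of_not_left hsep.1 hcA, hcA⟩)

lemma sepBy_of_sep {A B : Set V} (hsep : IsSepn G A B) {a b : V} (ha : a ∈ A \ B) (hb : b ∈ B \ A) :
    SepBy G (A ∩ B) a b :=
  ⟨fun h => ha.2 h.2, fun h => hb.2 h.1, fun p => walk_meets hsep hb p ha⟩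

lemma order_ge [Fintype V] (hconn : KConn G k) {A B : Set V} (hsep : IsSepn G A B)
    (hprop : ProperSep A B) : k ≤ (A ∩ B).ncard := by
  by_contra hlt
  push_neg at hlt
  obtain ⟨a, haA, haB⟩ := Set.not_subset.mp hprop.1
  obtain ⟨b, hbB, hbA⟩ := Set.not_subset.mp hprop.2
  have hfin : (A ∩ B).Finite := Set.toFinite _
  have hcard : hfin.toFinset.card < k := by rwa [Set.ncard_eq_toFinset_card _ hfin] at hlt
  refine hconn.2 hfin.toFinset hcard a b ?_
  rw [Set.Finite.coe_toFinset]
  exact sepBy_of_sep hsep ⟨haA, haB⟩ ⟨hbB, hbA⟩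

lemma sep_of_sepBy {S : Set V} {u v : V} (h : SepBy G S u v) :
    ∃ A B : Set V, IsSepn G A B ∧ u ∈ A \ B ∧ v ∈ B \ A ∧ A ∩ B ⊆ S ∧ (A \ B) ∩ S = ∅ := by
  classical
  set R : Set V := {x | ∃ p : G.Walk u x, ∀ w ∈ p.support, w ∉ S} with hR
  have huR : u ∈ R := ⟨SimpleGraph.Walk.nil, by intro w hw; simp at hw; subst hw; exact h.1⟩
  have hRS : ∀ x ∈ R, x ∉ S := fun x hx => hx.choose_spec x hx.choose.end_mem_support
  have hclose : ∀ {x z : V}, x ∈ R → G.Adj x z → z ∉ S → z ∈ R := by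
    rintro x z ⟨p, hp⟩ hadj hz
    refine ⟨p.concat hadj, ?_⟩
    intro w hw
    rw [SimpleGraph.Walk.support_concat, List.mem_append] at hw
    rcases hw with hw | hw
    · exact hp w hw
    · simp at hw; subst hw; exact hz
  have hvR : v ∉ R := by
    rintro ⟨p, hp⟩
    obtain ⟨w, hw, hwS⟩ := h.2.2 p
    exact hp w hw hwS
  refine ⟨R ∪ S, Rᶜ, ⟨?_, ?_⟩, ⟨Or.inl huR, fun hc => hc huR⟩,
    ⟨hvR, fun hc => hc.elim hvR h.2.1⟩, ?_, ?_⟩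
  · ext x; simp only [Set.mem_union, Set.mem_compl_iff, Set.mem_univ, iff_true]; tauto
  · rintro a ⟨haA, haB⟩ b ⟨hbB, hbA⟩ hadj
    simp only [Set.mem_compl_iff, not_not] at haB
    have hbS : b ∉ S := fun hb => hbA (Or.inr hb)
    exact hbB (hclose haB hadj hbS)
  · rintro x ⟨hx1, hx2⟩
    simp only [Set.mem_compl_iff] at hx2
    exact hx1.resolve_left hx2
  · ext x
    simp only [Set.mem_inter_iff, Set.mem_diff, Set.mem_compl_iff, not_not, Set.mem_empty_iff_false, iff_false]
    rintro ⟨⟨_, hxR⟩, hxS⟩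
    exact hRS x hxR hxS

end Aux

section Aux2
open Set SimpleGraph

variable {G : SimpleGraph V} {k : ℕ}

lemma corner_sep {A B A' B' : Set V} (h1 : IsSepn G A B) (h2 : IsSepn G A' B') :
    IsSepn G (A ∩ A') (B ∪ B') := by
  constructor
  · ext x
    simp only [Set.mem_union, Set.mem_inter_iff, Set.mem_univ, iff_true]
    have hx1 := fun h => mem_of_not_left h1.1 (x := x) h
    have hx2 := fun h => mem_of_not_left h2.1 (x := x) h
    tauto
  · rintro a ⟨⟨haA, haA'⟩, haBB'⟩ b ⟨_, hb⟩ hadj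
    simp only [Set.mem_union, not_or] at haBB'
    by_cases hbA : b ∈ A
    · have hbA' : b ∉ A' := fun hc => hb ⟨hbA, hc⟩
      exact h2.2 a ⟨haA', haBB'.2⟩ b ⟨mem_of_not_left ((Set.union_comm A' B') ▸ h2.1) hbA', hbA'⟩ hadj
    · exact h1.2 a ⟨haA, haBB'.1⟩ b ⟨mem_of_not_left ((Set.union_comm A B) ▸ h1.1) hbA, hbA⟩ hadj

lemma submod (A B A' B' : Set V) [Fintype V] :
    ((A ∩ A') ∩ (B ∪ B')).ncard + ((A ∪ A') ∩ (B ∩ B')).ncard ≤ (A ∩ B).ncard + (A' ∩ B').ncard := by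
  set X1 := (A ∩ A') ∩ (B ∪ B') with hX1
  set X2 := (A ∪ A') ∩ (B ∩ B') with hX2
  have h1 : X1 ∪ X2 ⊆ (A ∩ B) ∪ (A' ∩ B') := by
    intro x hx
    simp only [hX1, hX2, Set.mem_union, Set.mem_inter_iff] at hx ⊢
    tauto
  have h2 : X1 ∩ X2 ⊆ (A ∩ B) ∩ (A' ∩ B') := by
    intro x hx
    simp only [hX1, hX2, Set.mem_union, Set.mem_inter_iff] at hx ⊢
    tauto
  calc X1.ncard + X2.ncard
      = (X1 ∪ X2).ncard + (X1 ∩ X2).ncard :=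
        (Set.ncard_union_add_ncard_inter X1 X2 (Set.toFinite _) (Set.toFinite _)).symm
    _ ≤ ((A ∩ B) ∪ (A' ∩ B')).ncard + ((A ∩ B) ∩ (A' ∩ B')).ncard :=
        add_le_add (Set.ncard_le_ncard h1 (Set.toFinite _)) (Set.ncard_le_ncard h2 (Set.toFinite _))
    _ = (A ∩ B).ncard + (A' ∩ B').ncard :=
        Set.ncard_union_add_ncard_inter _ _ (Set.toFinite _) (Set.toFinite _)

lemma frag_bound [Fintype V] [DecidableRel G.Adj] (htri : G.CliqueFree 3)
    (hδ : k + 1 ≤ G.minDegree) {A B : Set V} (hsep : IsSepn G A B)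
    (hord : (A ∩ B).ncard ≤ k) (hne : (A \ B).Nonempty) :
    2 * G.minDegree ≤ A.ncard := by
  classical
  obtain ⟨x, hx⟩ := hne
  have hnb : ∀ {y : V}, y ∈ A \ B → (G.neighborFinset y : Set V) ⊆ A := by
    intro y hy z hz
    rw [Finset.mem_coe, SimpleGraph.mem_neighborFinset] at hz
    by_contra hzA
    exact hsep.2 y hy z ⟨mem_of_not_left ((Set.union_comm A B) ▸ hsep.1) hzA, hzA⟩ hz
  have hdegs : ∀ y : V, G.minDegree ≤ (G.neighborFinset y).card := by
    intro y; rw [SimpleGraph.card_neighborFinset_eq_degree]; exact G.minDegree_le_degree y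
  -- find neighbor y of x inside A \ B
  have hxnb : ¬ (G.neighborFinset x : Set V) ⊆ A ∩ B := by
    intro hc
    have := Set.ncard_le_ncard hc (Set.toFinite _)
    rw [Set.ncard_coe_finset] at this
    have := le_trans (hdegs x) this
    omega
  obtain ⟨y, hy1, hy2⟩ := Set.not_subset.mp hxnb
  have hyA : y ∈ A := hnb hx hy1
  have hyAB : y ∈ A \ B := ⟨hyA, fun hc => hy2 ⟨hyA, hc⟩⟩
  have hxy : G.Adj x y := by
    rw [Finset.mem_coe, SimpleGraph.mem_neighborFinset] at hy1
    exact hy1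
  have hdisj : Disjoint (G.neighborFinset x) (G.neighborFinset y) := by
    rw [Finset.disjoint_left]
    intro z hzx hzy
    rw [SimpleGraph.mem_neighborFinset] at hzx hzy
    exact htri {x, y, z} (SimpleGraph.is3Clique_triple_iff.mpr ⟨hxy, hzx, hzy⟩)
  have hsub : ((G.neighborFinset x ∪ G.neighborFinset y : Finset V) : Set V) ⊆ A := by
    rw [Finset.coe_union]
    exact Set.union_subset (hnb hx) (hnb hyAB)
  have hcard := Set.ncard_le_ncard hsub (Set.toFinite _)
  rw [Set.ncard_coe_finset, Finset.card_union_of_disjoint hdisj] at hcard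
  have := add_le_add (hdegs x) (hdegs y)
  omega

end Aux2

section Aux3
open Set SimpleGraph

variable {G : SimpleGraph V} {k : ℕ}

lemma key_insep [Fintype V] [DecidableRel G.Adj] (hconn : KConn G k) (htri : G.CliqueFree 3)
    (hδ : k + 1 ≤ G.minDegree) (W : Set V) {C D : Set V} (hsep : IsSepn G C D)
    (hprop : ProperSep C D) (hord : (C ∩ D).ncard ≤ k) (hCW : C ⊆ W)
    (hmin : ∀ C' D' : Set V, IsSepn G C' D' → ProperSep C' D' → (C' ∩ D').ncard ≤ k →
      C' ⊆ W → C.ncard ≤ C'.ncard) :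
    Insep G k C := by
  intro S hS u hu v hv hSep
  obtain ⟨A, B, hsepAB, huA, hvB, hABS, hfrag⟩ := sep_of_sepBy hSep
  have hordAB : (A ∩ B).ncard ≤ k := by
    refine le_trans (Set.ncard_le_ncard hABS (Set.toFinite _)) ?_
    rw [Set.ncard_coe_finset]; exact hS
  have hCmem : ∀ x : V, x ∉ C → x ∈ D := fun x => mem_of_not_left hsep.1
  have hAmem : ∀ x : V, x ∉ A → x ∈ B := fun x => mem_of_not_left hsepAB.1
  have hDCne : (D \ C).Nonempty := by
    obtain ⟨x, hx1, hx2⟩ := Set.not_subset.mp hprop.2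
    exact ⟨x, hx1, hx2⟩
  have hCDne : (C \ D).Nonempty := by
    obtain ⟨x, hx1, hx2⟩ := Set.not_subset.mp hprop.1
    exact ⟨x, hx1, hx2⟩
  have hCcard : 2 * G.minDegree ≤ C.ncard := frag_bound htri hδ hsep hord hCDne
  -- C \ D has more than k elements
  have hsplitC : C.ncard ≤ (C \ D).ncard + (C ∩ D).ncard := by
    refine le_trans (Set.ncard_le_ncard ?_ (Set.toFinite _)) (Set.ncard_union_le _ _)
    intro x hx
    by_cases hxD : x ∈ D
    · exact Or.inr ⟨hx, hxD⟩
    · exact Or.inl ⟨hx, hxD⟩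
  have hCDbig : k < (C \ D).ncard := by omega
  -- an element of C \ D outside S
  have hPQ : ((C \ D) ∩ (A \ B)).Nonempty ∨ ((C \ D) \ A).Nonempty := by
    have hns : ¬ (C \ D) ⊆ (↑S : Set V) := by
      intro hc
      have := Set.ncard_le_ncard hc (Set.toFinite _)
      rw [Set.ncard_coe_finset] at this
      omega
    obtain ⟨x, hx1, hx2⟩ := Set.not_subset.mp hns
    by_cases hxA : x ∈ A
    · left
      refine ⟨x, hx1, hxA, fun hxB => hx2 (hABS ⟨hxA, hxB⟩)⟩
    · right
      exact ⟨x, hx1, hxA⟩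
  have hcorner_contra : ∀ X Y : Set V, IsSepn G X Y → ProperSep X Y →
      (X ∩ Y).ncard ≤ k → X ⊂ C → False := by
    intro X Y h1 h2 h3 h4
    have hm := hmin X Y h1 h2 h3 (h4.subset.trans hCW)
    have hl := Set.ncard_lt_ncard h4 (Set.toFinite _)
    omega
  have hT1sep : IsSepn G (C ∩ A) (D ∪ B) := corner_sep hsep hsepAB
  have hT2sep : IsSepn G (C ∩ B) (D ∪ A) := corner_sep hsep (isSepn_symm hsepAB)
  have hT1small : ∀ p ∈ (C \ D) ∩ (A \ B), ((C ∩ A) ∩ (D ∪ B)).ncard ≤ k → False := by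
    rintro p ⟨hp1, hp2⟩ hT1
    refine hcorner_contra (C ∩ A) (D ∪ B) hT1sep ⟨?_, ?_⟩ hT1 ?_
    · exact Set.not_subset.mpr ⟨p, ⟨hp1.1, hp2.1⟩, fun hc => hc.elim hp1.2 hp2.2⟩
    · exact Set.not_subset.mpr ⟨v, Or.inr hvB.1, fun hc => hvB.2 hc.2⟩
    · refine Set.ssubset_iff_subset_ne.mpr ⟨Set.inter_subset_left, fun hc => ?_⟩
      have : v ∈ C ∩ A := by rw [hc]; exact hv
      exact hvB.2 this.2
  have hT2small : ∀ q ∈ (C \ D) \ A, ((C ∩ B) ∩ (D ∪ A)).ncard ≤ k → False := by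
    rintro q ⟨hq1, hq2⟩ hT2
    refine hcorner_contra (C ∩ B) (D ∪ A) hT2sep ⟨?_, ?_⟩ hT2 ?_
    · exact Set.not_subset.mpr ⟨q, ⟨hq1.1, hAmem q hq2⟩, fun hc => hc.elim hq1.2 hq2⟩
    · exact Set.not_subset.mpr ⟨u, Or.inr huA.1, fun hc => huA.2 hc.2⟩
    · refine Set.ssubset_iff_subset_ne.mpr ⟨Set.inter_subset_left, fun hc => ?_⟩
      have : u ∈ C ∩ B := by rw [hc]; exact hu
      exact huA.2 this.2
  have hT1big : ¬ ((C ∩ A) ∩ (D ∪ B)).ncard ≤ k → D \ C ⊆ A := by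
    intro hT1
    have hsub := submod C D A B
    have hU1 : ((C ∪ A) ∩ (D ∩ B)).ncard < k := by omega
    have hU1sep : IsSepn G (D ∩ B) (C ∪ A) := corner_sep (isSepn_symm hsep) (isSepn_symm hsepAB)
    have hU1imp : ¬ ProperSep (D ∩ B) (C ∪ A) := by
      intro hc
      have := order_ge hconn hU1sep hc
      rw [Set.inter_comm] at this
      omega
    rw [ProperSep, not_and_or, not_not, not_not] at hU1imp
    have hDBCA : D ∩ B ⊆ C ∪ A := by
      rcases hU1imp with h | h
      · exact h
      · exact absurd (h (Or.inl hu)) (fun hc : u ∈ D ∩ B => huA.2 hc.2)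
    intro x hx
    by_cases hxB : x ∈ B
    · rcases hDBCA ⟨hx.1, hxB⟩ with h | h
      · exact absurd h hx.2
      · exact h
    · by_contra hxA
      exact hxB (hAmem x hxA)
  have hT2big : ¬ ((C ∩ B) ∩ (D ∪ A)).ncard ≤ k → D \ C ⊆ B := by
    intro hT2
    have hsub := submod C D B A
    have hBA : (B ∩ A).ncard ≤ k := by rw [Set.inter_comm]; exact hordAB
    have hU2 : ((C ∪ B) ∩ (D ∩ A)).ncard < k := by omega
    have hU2sep : IsSepn G (D ∩ A) (C ∪ B) := corner_sep (isSepn_symm hsep) hsepAB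
    have hU2imp : ¬ ProperSep (D ∩ A) (C ∪ B) := by
      intro hc
      have := order_ge hconn hU2sep hc
      rw [Set.inter_comm] at this
      omega
    rw [ProperSep, not_and_or, not_not, not_not] at hU2imp
    have hDACB : D ∩ A ⊆ C ∪ B := by
      rcases hU2imp with h | h
      · exact h
      · exact absurd (h (Or.inl hv)) (fun hc : v ∈ D ∩ A => hvB.2 hc.2)
    intro x hx
    by_cases hxA : x ∈ A
    · rcases hDACB ⟨hx.1, hxA⟩ with h | h
      · exact absurd h hx.2
      · exact h
    · exact hAmem x hxA
  -- final contradictions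
  have hcontraD : D \ C ⊆ A → D \ C ⊆ B → False := by
    intro h1 h2
    have hDCS : D \ C ⊆ (↑S : Set V) := fun x hx => hABS ⟨h1 hx, h2 hx⟩
    have hDCcard : (D \ C).ncard ≤ k := by
      refine le_trans (Set.ncard_le_ncard hDCS (Set.toFinite _)) ?_
      rw [Set.ncard_coe_finset]; exact hS
    have hDC : (D ∩ C).ncard ≤ k := by rw [Set.inter_comm]; exact hord
    have hsplitD : D.ncard ≤ (D \ C).ncard + (D ∩ C).ncard := by
      refine le_trans (Set.ncard_le_ncard ?_ (Set.toFinite _)) (Set.ncard_union_le _ _)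
      intro x hx
      by_cases hxC : x ∈ C
      · exact Or.inr ⟨hx, hxC⟩
      · exact Or.inl ⟨hx, hxC⟩
    have hDbig : 2 * G.minDegree ≤ D.ncard := frag_bound htri hδ (isSepn_symm hsep) hDC hDCne
    omega
  by_cases hP : ((C \ D) ∩ (A \ B)).Nonempty
  · by_cases hT1 : ((C ∩ A) ∩ (D ∪ B)).ncard ≤ k
    · obtain ⟨p, hp⟩ := hP
      exact hT1small p hp hT1
    · have hDCA := hT1big hT1
      by_cases hQ : ((C \ D) \ A).Nonempty
      · by_cases hT2 : ((C ∩ B) ∩ (D ∪ A)).ncard ≤ k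
        · obtain ⟨q, hq⟩ := hQ
          exact hT2small q hq hT2
        · exact hcontraD hDCA (hT2big hT2)
      · -- B is small
        have hCDA : C \ D ⊆ A := by
          intro x hx
          by_contra hxA
          exact hQ ⟨x, hx, hxA⟩
        have hBsub : B ⊆ (↑S : Set V) ∪ (C ∩ D) := by
          intro x hxB
          by_cases hxC : x ∈ C
          · by_cases hxD : x ∈ D
            · exact Or.inr ⟨hxC, hxD⟩
            · exact Or.inl (hABS ⟨hCDA ⟨hxC, hxD⟩, hxB⟩)
          · exact Or.inl (hABS ⟨hDCA ⟨hCmem x hxC, hxC⟩, hxB⟩)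
        have hBcard : B.ncard ≤ k + k := by
          refine le_trans (Set.ncard_le_ncard hBsub (Set.toFinite _)) ?_
          refine le_trans (Set.ncard_union_le _ _) ?_
          have : (↑S : Set V).ncard ≤ k := by rw [Set.ncard_coe_finset]; exact hS
          omega
        have hBbig : 2 * G.minDegree ≤ B.ncard := by
          refine frag_bound htri hδ (isSepn_symm hsepAB) ?_ ⟨v, hvB⟩
          rw [Set.inter_comm]; exact hordAB
        omega
  · have hQ := hPQ.resolve_left hP
    by_cases hT2 : ((C ∩ B) ∩ (D ∪ A)).ncard ≤ k
    · obtain ⟨q, hq⟩ := hQ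
      exact hT2small q hq hT2
    · have hDCB := hT2big hT2
      -- A is small
      have hABsub : A \ B ⊆ C ∩ D := by
        intro x hx
        by_cases hxC : x ∈ C
        · by_cases hxD : x ∈ D
          · exact ⟨hxC, hxD⟩
          · exact absurd ⟨x, ⟨hxC, hxD⟩, hx⟩ hP
        · exact absurd (hDCB ⟨hCmem x hxC, hxC⟩) hx.2
      have hAcard : A.ncard ≤ k + k := by
        have h1 : A ⊆ (A \ B) ∪ (A ∩ B) := by
          intro x hx
          by_cases hxB : x ∈ B
          · exact Or.inr ⟨hx, hxB⟩
          · exact Or.inl ⟨hx, hxB⟩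
        have h2 := le_trans (Set.ncard_le_ncard h1 (Set.toFinite _)) (Set.ncard_union_le _ _)
        have h3 := Set.ncard_le_ncard hABsub (Set.toFinite _)
        omega
      have hAbig : 2 * G.minDegree ≤ A.ncard := frag_bound htri hδ hsepAB hordAB ⟨u, huA⟩
      omega

end Aux3

section Aux4
open Set SimpleGraph

variable {G : SimpleGraph V} {k : ℕ}

lemma block_of_min [Fintype V] [DecidableRel G.Adj] (hconn : KConn G k) (htri : G.CliqueFree 3)
    (hδ : k + 1 ≤ G.minDegree) (W : Set V) {C D : Set V} (hsep : IsSepn G C D)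
    (hprop : ProperSep C D) (hord : (C ∩ D).ncard ≤ k) (hCW : C ⊆ W)
    (hmin : ∀ C' D' : Set V, IsSepn G C' D' → ProperSep C' D' → (C' ∩ D').ncard ≤ k →
      C' ⊆ W → C.ncard ≤ C'.ncard) :
    IsBlockN G (k + 1) C ∧ 2 * G.minDegree ≤ C.ncard := by
  have hCDne : (C \ D).Nonempty := by
    obtain ⟨x, hx1, hx2⟩ := Set.not_subset.mp hprop.1
    exact ⟨x, hx1, hx2⟩
  have hCcard : 2 * G.minDegree ≤ C.ncard := frag_bound htri hδ hsep hord hCDne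
  have hins : Insep G k C := key_insep hconn htri hδ W hsep hprop hord hCW hmin
  refine ⟨⟨by omega, by simpa using hins, ?_⟩, hCcard⟩
  intro B' h1 h2
  simp only [Nat.add_sub_cancel] at h2
  refine Set.Subset.antisymm ?_ h1
  intro x hx
  by_contra hxC
  have hxD : x ∈ D \ C := ⟨mem_of_not_left hsep.1 hxC, hxC⟩
  obtain ⟨y, hy⟩ := hCDne
  have hsepby : SepBy G (C ∩ D) y x := sepBy_of_sep hsep hy hxD
  have hfin : (C ∩ D).Finite := Set.toFinite _
  have hcard : hfin.toFinset.card ≤ k := by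
    rwa [← Set.ncard_eq_toFinset_card _ hfin]
  refine h2 hfin.toFinset hcard y (h1 hy.1) x hx ?_
  rwa [Set.Finite.coe_toFinset]

lemma exists_min_sep [Fintype V] (W : Set V)
    (hne : ∃ A B : Set V, IsSepn G A B ∧ ProperSep A B ∧ (A ∩ B).ncard ≤ k ∧ A ⊆ W) :
    ∃ C D : Set V, IsSepn G C D ∧ ProperSep C D ∧ (C ∩ D).ncard ≤ k ∧ C ⊆ W ∧
      ∀ C' D' : Set V, IsSepn G C' D' → ProperSep C' D' → (C' ∩ D').ncard ≤ k →
        C' ⊆ W → C.ncard ≤ C'.ncard := by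
  classical
  set P : Set ℕ := {n | ∃ A B : Set V,
    (IsSepn G A B ∧ ProperSep A B ∧ (A ∩ B).ncard ≤ k ∧ A ⊆ W) ∧ A.ncard = n} with hP
  have hPne : P.Nonempty := by
    obtain ⟨A, B, h⟩ := hne
    exact ⟨A.ncard, A, B, h, rfl⟩
  have hmem := Nat.sInf_mem hPne
  obtain ⟨C, D, ⟨h1, h2, h3, h4⟩, h5⟩ := hmem
  refine ⟨C, D, h1, h2, h3, h4, ?_⟩
  intro C' D' a b c d
  have := Nat.sInf_le (show C'.ncard ∈ P from ⟨C', D', ⟨a, b, c, d⟩, rfl⟩)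
  omega

end Aux4


theorem stmt6 [Fintype V] [Nonempty V] (G : SimpleGraph V) [DecidableRel G.Adj]
    (k : ℕ) (hconn : KConn G k) (htri : G.CliqueFree 3)
    (hδ : k + 1 ≤ G.minDegree) :
    IsBlockN G (k + 1) Set.univ ∨
      ∃ B₁ B₂ : Set V, B₁ ≠ B₂ ∧ IsBlockN G (k + 1) B₁ ∧ IsBlockN G (k + 1) B₂ ∧
        2 * G.minDegree ≤ B₁.ncard ∧ 2 * G.minDegree ≤ B₂.ncard := by
  classical
  by_cases hins : Insep G k Set.univ
  · left
    refine ⟨?_, by simpa using hins, fun B' h1 _ => Set.univ_subset_iff.mp h1⟩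
    rw [Set.ncard_univ, Nat.card_eq_fintype_card]
    exact hconn.1
  · right
    rw [Insep] at hins
    push_neg at hins
    obtain ⟨S, hS, u, -, v, -, hSep⟩ := hins
    obtain ⟨A0, B0, hsep0, hu0, hv0, hsub0, -⟩ := sep_of_sepBy hSep
    have hord0 : (A0 ∩ B0).ncard ≤ k := by
      refine le_trans (Set.ncard_le_ncard hsub0 (Set.toFinite _)) ?_
      rw [Set.ncard_coe_finset]; exact hS
    have hprop0 : ProperSep A0 B0 :=
      ⟨Set.not_subset.mpr ⟨u, hu0.1, hu0.2⟩, Set.not_subset.mpr ⟨v, hv0.1, hv0.2⟩⟩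
    obtain ⟨C₁, D₁, h1sep, h1prop, h1ord, -, h1min⟩ :=
      exists_min_sep (G := G) (k := k) Set.univ
        ⟨A0, B0, hsep0, hprop0, hord0, Set.subset_univ _⟩
    obtain ⟨hB1, hB1card⟩ :=
      block_of_min hconn htri hδ Set.univ h1sep h1prop h1ord (Set.subset_univ _) h1min
    obtain ⟨C₂, D₂, h2sep, h2prop, h2ord, h2W, h2min⟩ :=
      exists_min_sep (G := G) (k := k) D₁
        ⟨D₁, C₁, isSepn_symm h1sep, ⟨h1prop.2, h1prop.1⟩,
          by rw [Set.inter_comm]; exact h1ord, subset_rfl⟩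
    obtain ⟨hB2, hB2card⟩ := block_of_min hconn htri hδ D₁ h2sep h2prop h2ord h2W h2min
    refine ⟨C₁, C₂, ?_, hB1, hB2, hB1card, hB2card⟩
    intro hc
    exact h1prop.1 (hc ▸ h2W)
end

section
/- For every graph G, the block number β(G) equals the block-width bw(G); equivalently, for every k, G has a block-decomposition of adhesion and width both at most k if and only if G has no (k+1)-block. -/
variable {V : Type*}

/-- A rooted binary branching tree whose branching nodes carry separations and
whose leaves carry vertex sets. -/
inductive BDTree (V : Type u) : Type u
  | leaf (X : Set V) : BDTree V
  | node (A B : Set V) (l r : BDTree V) : BDTree V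

/-- `BValid G X t`: `t` is a block-decomposition tree of the part `X` of `G`:
each branching node is labelled by a separation of `G` separating two vertices of the
current set, and the children carry the intersections with the two sides. -/
def BValid (G : SimpleGraph V) : Set V → BDTree V → Prop
  | X, .leaf Y => Y = X
  | X, .node A B l r =>
      IsSepn G A B ∧ (∃ u ∈ X, ∃ v ∈ X, u ∈ A \ B ∧ v ∈ B \ A) ∧
        BValid G (X ∩ A) l ∧ BValid G (X ∩ B) r

/-- The leaf sets of a block-decomposition tree. -/
def BLeaves : BDTree V → Set (Set V)
  | .leaf Y => {Y}
  | .node _ _ l r => BLeaves l ∪ BLeaves r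

/-- The decomposition has adhesion at most `k`. -/
def BAdhLE (k : ℕ) : BDTree V → Prop
  | .leaf _ => True
  | .node A B l r => (A ∩ B).ncard ≤ k ∧ BAdhLE k l ∧ BAdhLE k r

/-- The decomposition has width at most `k`. -/
def BWidthLE (k : ℕ) : BDTree V → Prop
  | .leaf Y => Y.ncard ≤ k
  | .node _ _ l r => BWidthLE k l ∧ BWidthLE k r

-- auxiliary lemmas

lemma walk_meets_sep {G : SimpleGraph V} {A C : Set V} (hsep : IsSepn G A C) :
    ∀ {x u : V} (p : G.Walk x u), x ∈ A → u ∉ A → ∃ w ∈ p.support, w ∈ A ∩ C := by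
  intro x u p
  induction p with
  | nil => intro hx hu; exact absurd hx hu
  | @cons x y u h q ih =>
    intro hx hu
    by_cases hxC : x ∈ C
    · exact ⟨x, by simp, hx, hxC⟩
    · by_cases hyA : y ∈ A
      · obtain ⟨w, hw, hwAC⟩ := ih hyA hu
        exact ⟨w, by simp [hw], hwAC⟩
      · have hyC : y ∈ C := by
          have h2 : y ∈ A ∪ C := hsep.1 ▸ Set.mem_univ y
          simp only [Set.mem_union] at h2
          tauto
        exact absurd h (hsep.2 x ⟨hx, hxC⟩ y ⟨hyC, hyA⟩)

lemma insep_side [Fintype V] {G : SimpleGraph V} {k : ℕ} {B A C : Set V}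
    (hB : Insep G k B) (hsep : IsSepn G A C) (hadh : (A ∩ C).ncard ≤ k) :
    B ⊆ A ∨ B ⊆ C := by
  by_contra hcon
  push_neg at hcon
  obtain ⟨a, haB, haC⟩ := Set.not_subset.mp hcon.2
  obtain ⟨b, hbB, hbA⟩ := Set.not_subset.mp hcon.1
  have haA : a ∈ A := by
    have h2 : a ∈ A ∪ C := hsep.1 ▸ Set.mem_univ a
    simp only [Set.mem_union] at h2
    tauto
  have hfin : (A ∩ C).Finite := Set.toFinite _
  have hcard : hfin.toFinset.card ≤ k := by
    rwa [← Set.ncard_eq_toFinset_card _ hfin]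
  refine hB hfin.toFinset hcard a haB b hbB ?_
  refine ⟨?_, ?_, ?_⟩
  · simp only [Set.Finite.coe_toFinset]; exact fun h => haC h.2
  · simp only [Set.Finite.coe_toFinset]; exact fun h => hbA h.1
  · intro p
    obtain ⟨w, hw, hwAC⟩ := walk_meets_sep hsep p haA hbA
    exact ⟨w, hw, by simpa using hwAC⟩

lemma forward_aux [Fintype V] {G : SimpleGraph V} {k : ℕ} {B : Set V} (hB : Insep G k B) :
    ∀ (t : BDTree V) (X : Set V), BValid G X t → BAdhLE k t → BWidthLE k t → B ⊆ X →
      B.ncard ≤ k := by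
  intro t
  induction t with
  | leaf Y =>
    intro X hv ha hw hs
    have : B ⊆ Y := hv ▸ hs
    exact le_trans (Set.ncard_le_ncard this (Set.toFinite Y)) hw
  | node A C l r ihl ihr =>
    intro X hv ha hw hs
    obtain ⟨hsep, _, hvl, hvr⟩ := hv
    rcases insep_side hB hsep ha.1 with h | h
    · exact ihl (X ∩ A) hvl ha.2.1 hw.1 (Set.subset_inter hs h)
    · exact ihr (X ∩ C) hvr ha.2.2 hw.2 (Set.subset_inter hs h)

lemma exists_block [Fintype V] {G : SimpleGraph V} {k : ℕ} {X : Set V}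
    (hcard : k + 1 ≤ X.ncard) (hins : Insep G k X) : ∃ B, IsBlockN G (k + 1) B := by
  have hfin : ({B | X ⊆ B ∧ Insep G k B} : Set (Set V)).Finite := Set.toFinite _
  obtain ⟨B, hBs, hmax⟩ := hfin.exists_maximalFor Set.ncard _
    ⟨X, subset_rfl, hins⟩
  refine ⟨B, ?_, ?_, ?_⟩
  · exact le_trans hcard (Set.ncard_le_ncard hBs.1 (Set.toFinite B))
  · simpa using hBs.2
  · intro B' hBB' hB'
    have hB's : B' ∈ {B | X ⊆ B ∧ Insep G k B} := ⟨hBs.1.trans hBB', by simpa using hB'⟩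
    have := hmax hB's (Set.ncard_le_ncard hBB' (Set.toFinite B'))
    exact (Set.eq_of_subset_of_ncard_le hBB' this (Set.toFinite B')).symm

lemma build [Fintype V] {G : SimpleGraph V} {k : ℕ}
    (hnb : ¬ ∃ B : Set V, IsBlockN G (k + 1) B) :
    ∀ (n : ℕ) (X : Set V), X.ncard ≤ n →
      ∃ t : BDTree V, BValid G X t ∧ BAdhLE k t ∧ BWidthLE k t := by
  intro n
  induction n with
  | zero =>
    intro X hX
    exact ⟨.leaf X, rfl, trivial, le_trans hX (Nat.zero_le k)⟩
  | succ n ih =>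
    intro X hX
    by_cases hle : X.ncard ≤ k
    · exact ⟨.leaf X, rfl, trivial, hle⟩
    · push_neg at hle
      have hins : ¬ Insep G k X := fun h => hnb (exists_block hle h)
      unfold Insep at hins
      push_neg at hins
      obtain ⟨S, hScard, u, huX, v, hvX, hsep⟩ := hins
      obtain ⟨huS, hvS, hwalk⟩ := hsep
      set R : Set V := {w : V | ∃ p : G.Walk u w, ∀ x ∈ p.support, x ∉ (S : Set V)}
        with hR
      have huR : u ∈ R := ⟨.nil, by simpa using huS⟩
      have hRS : ∀ w ∈ R, w ∉ (S : Set V) := by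
        rintro w ⟨p, hp⟩
        exact hp w p.end_mem_support
      have hRcl : ∀ a ∈ R, ∀ b, G.Adj a b → b ∉ (S : Set V) → b ∈ R := by
        rintro a ⟨p, hp⟩ b hab hbS
        refine ⟨p.concat hab, ?_⟩
        intro x hx
        simp only [SimpleGraph.Walk.support_concat, List.concat_eq_append, List.mem_append,
          List.mem_singleton] at hx
        rcases hx with hx | rfl
        · exact hp x hx
        · exact hbS
      have hvR : v ∉ R := by
        rintro ⟨p, hp⟩
        obtain ⟨w, hw, hwS⟩ := hwalk p
        exact hp w hw hwS
      set A : Set V := R ∪ (S : Set V) with hA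
      set C : Set V := Rᶜ with hC
      have hAC : A ∩ C ⊆ (S : Set V) := by
        rintro x ⟨hxA, hxC⟩
        rcases hxA with hxR | hxS
        · exact absurd hxR hxC
        · exact hxS
      have hsepn : IsSepn G A C := by
        constructor
        · apply Set.eq_univ_of_forall
          intro x
          by_cases hx : x ∈ R
          · exact Or.inl (Or.inl hx)
          · exact Or.inr hx
        · rintro a ⟨haA, haC⟩ b ⟨hbC, hbA⟩ hab
          simp only [hC, Set.mem_compl_iff, not_not] at haC
          have hbS : b ∉ (S : Set V) := fun h => hbA (Or.inr h)
          have hbR : b ∉ R := fun h => hbA (Or.inl h)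
          exact hbR (hRcl a haC b hab hbS)
      have huAC : u ∈ A \ C := ⟨Or.inl huR, by simpa [hC] using huR⟩
      have hvCA : v ∈ C \ A := by
        refine ⟨hvR, ?_⟩
        rintro (h | h)
        · exact hvR h
        · exact hvS h
      have hXfin : X.Finite := Set.toFinite X
      have hlt : ∀ Y : Set V, Y ⊆ X → (∃ x ∈ X, x ∉ Y) → Y.ncard ≤ n := by
        intro Y hYX ⟨x, hxX, hxY⟩
        have : Y ⊂ X := (Set.ssubset_iff_of_subset hYX).mpr ⟨x, hxX, hxY⟩
        have := Set.ncard_lt_ncard this hXfin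
        omega
      have hXA : (X ∩ A).ncard ≤ n :=
        hlt _ Set.inter_subset_left ⟨v, hvX, fun h => hvCA.2 h.2⟩
      have hXC : (X ∩ C).ncard ≤ n :=
        hlt _ Set.inter_subset_left ⟨u, huX, fun h => huAC.2 h.2⟩
      obtain ⟨tl, hvl, hal, hwl⟩ := ih (X ∩ A) hXA
      obtain ⟨tr, hvr, har, hwr⟩ := ih (X ∩ C) hXC
      refine ⟨.node A C tl tr, ⟨hsepn, ⟨u, huX, v, hvX, huAC, hvCA⟩, hvl, hvr⟩,
        ⟨?_, hal, har⟩, hwl, hwr⟩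
      exact le_trans (Set.ncard_le_ncard hAC (Set.toFinite _)) (by simpa using hScard)

theorem stmt16 [Fintype V] (G : SimpleGraph V) (k : ℕ) :
    (∃ t : BDTree V, BValid G Set.univ t ∧ BAdhLE k t ∧ BWidthLE k t)
      ↔ ¬ ∃ B : Set V, IsBlockN G (k + 1) B := by
  constructor
  · rintro ⟨t, hv, ha, hw⟩ ⟨B, hBcard, hBins, _⟩
    have : Insep G k B := by simpa using hBins
    have := forward_aux this t Set.univ hv ha hw (Set.subset_univ B)
    omega
  · intro hnb
    exact build hnb (Set.univ : Set V).ncard Set.univ le_rfl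
end
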